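/- arXiv:1908.07806 — 4 statements merged into one kernel-verified Lean document; each statement's English description precedes it below -/
import Mathlib

section
/- Let Ω be a bounded open subset of ℝ^N, s ∈ (0,1), and A an N-function. Then there exists a positive constant μ such that ‖u‖_A ≤ μ·[u]_{s,A} for every u ∈ W^s_0L_A(Ω), i.e. for every u ∈ W^sL_A(ℝ^N) with u = 0 almost everywhere in ℝ^N∖Ω; here ‖·‖_A is the Luxemburg norm over ℝ^N and [·]_{s,A} is the Gagliardo seminorm over ℝ^N × ℝ^N. -/
open MeasureTheory Filter Set
open scoped ENNReal NNReal RealInnerProductSpace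

noncomputable section

/-- An N-function: continuous, convex on `[0,∞)`, positive on `(0,∞)`,
`A t / t → 0` as `t → 0⁺`, `A t / t → ∞` as `t → ∞`, extended evenly to `ℝ`. -/
structure IsNFunction (A : ℝ → ℝ) : Prop where
  continuous : Continuous A
  convexOn : ConvexOn ℝ (Set.Ici 0) A
  pos : ∀ t > (0:ℝ), 0 < A t
  tendsto_zero : Tendsto (fun t => A t / t) (nhdsWithin 0 (Set.Ioi 0)) (nhds 0)
  tendsto_top : Tendsto (fun t => A t / t) atTop atTop
  even : ∀ t, A (-t) = A t

/-- An N-function together with its right-continuous density `a`,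
so that `A t = ∫₀ᵗ a(s) ds`. -/
structure IsNFunctionDeriv (A a : ℝ → ℝ) : Prop where
  toIsNFunction : IsNFunction A
  eq_integral : ∀ t, 0 ≤ t → A t = ∫ s in (0:ℝ)..t, a s
  monotone : MonotoneOn a (Set.Ici 0)
  rightCont : ∀ t, 0 ≤ t → ContinuousWithinAt a (Set.Ici t) t
  zero : a 0 = 0
  pos : ∀ t > (0:ℝ), 0 < a t
  tendsto_top : Tendsto a atTop atTop

/-- The Luxemburg norm of `u` on `Ω`. -/
def luxNorm {N : ℕ} (A : ℝ → ℝ) (Ω : Set (EuclideanSpace ℝ (Fin N)))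
    (u : EuclideanSpace ℝ (Fin N) → ℝ) : ℝ :=
  sInf {lam : ℝ | 0 < lam ∧ ∫⁻ x in Ω, ENNReal.ofReal (A (|u x| / lam)) ≤ 1}

/-- Membership in the Orlicz space `L_A(Ω)`. -/
def MemLA {N : ℕ} (A : ℝ → ℝ) (Ω : Set (EuclideanSpace ℝ (Fin N)))
    (u : EuclideanSpace ℝ (Fin N) → ℝ) : Prop :=
  Measurable u ∧ ∃ lam > (0:ℝ), ∫⁻ x in Ω, ENNReal.ofReal (A (lam * |u x|)) < ⊤

/-- The Gagliardo-type modular `∫_Ω∫_Ω A(|u x - u y|/|x-y|^s) |x-y|^{-N} dx dy`. -/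
def gaglModular {N : ℕ} (A : ℝ → ℝ) (s : ℝ) (Ω : Set (EuclideanSpace ℝ (Fin N)))
    (u : EuclideanSpace ℝ (Fin N) → ℝ) : ℝ≥0∞ :=
  ∫⁻ x in Ω, ∫⁻ y in Ω,
    ENNReal.ofReal (A (|u x - u y| / ‖x - y‖ ^ s) / ‖x - y‖ ^ N)

/-- The Gagliardo seminorm `[u]_{s,A}`. -/
def gaglSeminorm {N : ℕ} (A : ℝ → ℝ) (s : ℝ) (Ω : Set (EuclideanSpace ℝ (Fin N)))
    (u : EuclideanSpace ℝ (Fin N) → ℝ) : ℝ :=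
  sInf {lam : ℝ | 0 < lam ∧ ∫⁻ x in Ω, ∫⁻ y in Ω,
    ENNReal.ofReal (A (|u x - u y| / (lam * ‖x - y‖ ^ s)) / ‖x - y‖ ^ N) ≤ 1}

/-- Membership in the fractional Orlicz–Sobolev space `W^s L_A(Ω)`. -/
def MemWsLA {N : ℕ} (A : ℝ → ℝ) (s : ℝ) (Ω : Set (EuclideanSpace ℝ (Fin N)))
    (u : EuclideanSpace ℝ (Fin N) → ℝ) : Prop :=
  MemLA A Ω u ∧ ∃ lam > (0:ℝ), (∫⁻ x in Ω, ∫⁻ y in Ω,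
    ENNReal.ofReal (A (lam * |u x - u y| / ‖x - y‖ ^ s) / ‖x - y‖ ^ N)) < ⊤

/-- The norm `‖u‖_{s,A} = ‖u‖_A + [u]_{s,A}` of `W^s L_A(Ω)`. -/
def fracNorm {N : ℕ} (A : ℝ → ℝ) (s : ℝ) (Ω : Set (EuclideanSpace ℝ (Fin N)))
    (u : EuclideanSpace ℝ (Fin N) → ℝ) : ℝ :=
  luxNorm A Ω u + gaglSeminorm A s Ω u

/-- Membership in `W^s_0 L_A(Ω)`: member of `W^s L_A(ℝ^N)` vanishing a.e. outside `Ω`. -/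
def MemW0 {N : ℕ} (A : ℝ → ℝ) (s : ℝ) (Ω : Set (EuclideanSpace ℝ (Fin N)))
    (u : EuclideanSpace ℝ (Fin N) → ℝ) : Prop :=
  MemWsLA A s Set.univ u ∧ ∀ᵐ x, x ∉ Ω → u x = 0

/-- The set of values `t a(t) / A(t)` for `t > 0`; `p₀` is its `sInf`, `p⁰` its `sSup`. -/
def ratioSet (A a : ℝ → ℝ) : Set ℝ := {r | ∃ t, 0 < t ∧ r = t * a t / A t}

/-- `Ω` has Lipschitz (C^{0,1}) boundary: near each boundary point, `Ω` is the
subgraph of a Lipschitz function in a suitable direction. -/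
def HasLipschitzBoundary {N : ℕ} (Ω : Set (EuclideanSpace ℝ (Fin N))) : Prop :=
  ∀ x ∈ frontier Ω, ∃ U : Set (EuclideanSpace ℝ (Fin N)), IsOpen U ∧ x ∈ U ∧
    ∃ (v : EuclideanSpace ℝ (Fin N)) (φ : EuclideanSpace ℝ (Fin N) → ℝ) (K : ℝ≥0),
      ‖v‖ = 1 ∧ LipschitzWith K φ ∧
      Ω ∩ U = {y | y ∈ U ∧ (inner ℝ y v : ℝ) < φ (y - (inner ℝ y v : ℝ) • v)}


lemma A_zero' {A : ℝ → ℝ} (hA : IsNFunction A) : A 0 = 0 := by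
  have h1 : Tendsto A (nhdsWithin 0 (Set.Ioi 0)) (nhds (A 0)) :=
    (hA.continuous.tendsto 0).mono_left nhdsWithin_le_nhds
  have h2 : Tendsto (fun t : ℝ => A t / t * t) (nhdsWithin 0 (Set.Ioi 0)) (nhds 0) := by
    have := hA.tendsto_zero.mul
      (tendsto_nhdsWithin_of_tendsto_nhds (f := fun t : ℝ => t) tendsto_id)
    simpa using this
  have h3 : Tendsto A (nhdsWithin 0 (Set.Ioi 0)) (nhds 0) := by
    refine h2.congr' ?_
    filter_upwards [self_mem_nhdsWithin] with t ht
    exact div_mul_cancel₀ _ (ne_of_gt (Set.mem_Ioi.mp ht))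
  exact tendsto_nhds_unique h1 h3

lemma A_nonneg' {A : ℝ → ℝ} (hA : IsNFunction A) {t : ℝ} (ht : 0 ≤ t) : 0 ≤ A t := by
  rcases ht.lt_or_eq with h | h
  · exact (hA.pos t h).le
  · simp [← h, A_zero' hA]

lemma A_mono' {A : ℝ → ℝ} (hA : IsNFunction A) {a b : ℝ} (ha : 0 ≤ a) (hab : a ≤ b) :
    A a ≤ A b := by
  rcases hab.lt_or_eq with h | h
  · have hb : 0 < b := lt_of_le_of_lt ha h
    have hw1 : (0:ℝ) ≤ 1 - a / b := by
      have : a / b ≤ 1 := (div_le_one hb).2 hab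
      linarith
    have hw2 : (0:ℝ) ≤ a / b := div_nonneg ha hb.le
    have := hA.convexOn.2 (Set.mem_Ici.2 (le_refl 0)) (Set.mem_Ici.2 hb.le) hw1 hw2 (by ring)
    simp only [smul_eq_mul, mul_zero, zero_add] at this
    rw [div_mul_cancel₀ _ hb.ne'] at this
    calc A a ≤ (1 - a/b) * A 0 + a/b * A b := this
    _ = a/b * A b := by rw [A_zero' hA]; ring
    _ ≤ A b := by
        have hAb := A_nonneg' hA hb.le
        nlinarith [(div_le_one hb).2 hab]
  · rw [h]

lemma A_div_le' {A : ℝ → ℝ} (hA : IsNFunction A) {z t : ℝ} (hz : 0 ≤ z) (ht : 1 ≤ t) :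
    A (z / t) ≤ A z / t := by
  have ht0 : 0 < t := lt_of_lt_of_le one_pos ht
  have hw2 : (0:ℝ) ≤ 1/t := by positivity
  have hw1 : (0:ℝ) ≤ 1 - 1/t := by
    have : 1/t ≤ 1 := by rw [div_le_one ht0]; exact ht
    linarith
  have := hA.convexOn.2 (Set.mem_Ici.2 (le_refl 0)) (Set.mem_Ici.2 hz) hw1 hw2 (by ring)
  simp only [smul_eq_mul, mul_zero, zero_add] at this
  have h2 : (1/t) * z = z / t := by ring
  rw [h2, A_zero' hA] at this
  calc A (z/t) ≤ (1 - 1/t) * 0 + 1/t * A z := this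
  _ = A z / t := by ring

/-- Poincaré inequality on `W^s_0 L_A(Ω)`: on a bounded open set `Ω`,
`‖u‖_A ≤ μ [u]_{s,A}` (norms over `ℝ^N`) for all `u ∈ W^s_0 L_A(Ω)`. -/
theorem generalized_poincare_W0 {N : ℕ} (hN : 0 < N)
    (Ω : Set (EuclideanSpace ℝ (Fin N))) (hΩo : IsOpen Ω)
    (hΩb : Bornology.IsBounded Ω)
    (s : ℝ) (hs : s ∈ Set.Ioo (0:ℝ) 1) (A : ℝ → ℝ) (hA : IsNFunction A) :
    ∃ μ > (0:ℝ), ∀ u : EuclideanSpace ℝ (Fin N) → ℝ, MemW0 A s Ω u →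
      luxNorm A Set.univ u ≤ μ * gaglSeminorm A s Set.univ u := by
  classical
  haveI : Nonempty (Fin N) := ⟨⟨0, hN⟩⟩
  obtain ⟨R0, hR0⟩ := hΩb.subset_closedBall 0
  set R : ℝ := max R0 1 with hRdef
  have hR : (0:ℝ) < R := lt_of_lt_of_le one_pos (le_max_right _ _)
  have hΩR : Ω ⊆ Metric.closedBall (0:EuclideanSpace ℝ (Fin N)) R := by
    rw [hRdef]; exact hR0.trans (Metric.closedBall_subset_closedBall (le_max_left _ _))
  set B : ℝ≥0∞ := volume (Metric.ball (0:EuclideanSpace ℝ (Fin N)) 1) with hBdef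
  have hB0 : 0 < B := Metric.measure_ball_pos _ _ one_pos
  have hBtop : B < ⊤ := measure_ball_lt_top
  set V : ℝ≥0∞ := ENNReal.ofReal ((4*R)^N) * B - ENNReal.ofReal ((3*R)^N) * B with hVdef
  have hann : ∀ x : EuclideanSpace ℝ (Fin N),
      volume (Metric.closedBall x (4*R) \ Metric.ball x (3*R)) = V := by
    intro x
    rw [measure_diff (Metric.ball_subset_closedBall.trans
        (Metric.closedBall_subset_closedBall (by linarith)))
        measurableSet_ball.nullMeasurableSet measure_ball_lt_top.ne,
      Measure.addHaar_ball _ _ (by positivity), Measure.addHaar_closedBall _ _ (by positivity),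
      finrank_euclideanSpace_fin]
  have hV0 : 0 < V := by
    rw [hVdef, tsub_pos_iff_lt]
    rw [ENNReal.mul_lt_mul_iff_left hB0.ne' hBtop.ne]
    rw [ENNReal.ofReal_lt_ofReal_iff (by positivity)]
    exact pow_lt_pow_left₀ (by linarith) (by positivity) hN.ne'
  have hVtop : V < ⊤ := lt_of_le_of_lt tsub_le_self
    (ENNReal.mul_lt_top ENNReal.ofReal_lt_top hBtop)
  set c₁ : ℝ≥0∞ := ENNReal.ofReal (((4*R)^N)⁻¹) * V with hc1def
  have hc10 : c₁ ≠ 0 := by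
    refine mul_ne_zero ?_ hV0.ne'
    exact (ENNReal.ofReal_pos.mpr (by positivity)).ne'
  have hc1top : c₁ ≠ ⊤ := ENNReal.mul_ne_top ENNReal.ofReal_ne_top hVtop.ne
  have hc1r : 0 < c₁.toReal := ENNReal.toReal_pos hc10 hc1top
  set K : ℝ := max 1 (2 / c₁.toReal) with hKdef
  have hK1 : 1 ≤ K := le_max_left _ _
  have hK0 : 0 < K := lt_of_lt_of_le one_pos hK1
  have hKc : ENNReal.ofReal (1/K) ≤ c₁ := by
    rw [← ENNReal.ofReal_toReal hc1top]
    apply ENNReal.ofReal_le_ofReal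
    have h2 : 2 / c₁.toReal ≤ K := le_max_right _ _
    calc 1/K ≤ 1/(2/c₁.toReal) := one_div_le_one_div_of_le (by positivity) h2
    _ = c₁.toReal/2 := by rw [one_div_div]
    _ ≤ c₁.toReal := by linarith
  set μ : ℝ := K * (4*R)^s with hμdef
  have h4Rs : (0:ℝ) < (4*R)^s := Real.rpow_pos_of_pos (by linarith) s
  have hμ : 0 < μ := mul_pos hK0 h4Rs
  refine ⟨μ, hμ, ?_⟩
  intro u hu
  obtain ⟨⟨hLA, lam0, hlam0, hM⟩, hu0⟩ := hu
  simp only [Measure.restrict_univ] at hM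
  -- key estimate
  have key : ∀ lam : ℝ, 0 < lam →
      (∫⁻ x, ∫⁻ y, ENNReal.ofReal (A (|u x - u y| / (lam * ‖x - y‖ ^ s)) / ‖x - y‖ ^ N)) ≤ 1 →
      (∫⁻ x, ENNReal.ofReal (A (|u x| / (μ * lam)))) ≤ 1 := by
    intro lam hlam Hle
    set h : EuclideanSpace ℝ (Fin N) → ℝ := fun x => A (|u x| / (lam * (4*R)^s)) with hhdef
    have hh0 : ∀ x, 0 ≤ h x := fun x => A_nonneg' hA (by positivity)
    have A1 : ∀ᵐ x, ENNReal.ofReal (h x) * c₁ ≤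
        ∫⁻ y, ENNReal.ofReal (A (|u x - u y| / (lam * ‖x - y‖ ^ s)) / ‖x - y‖ ^ N) := by
      filter_upwards [hu0] with x hx
      by_cases hxB : x ∈ Metric.closedBall (0:EuclideanSpace ℝ (Fin N)) R
      · calc ENNReal.ofReal (h x) * c₁
            = ENNReal.ofReal (h x / (4*R)^N) * V := by
              rw [div_eq_mul_inv, ENNReal.ofReal_mul (hh0 x), hc1def, mul_assoc]
          _ = ∫⁻ _ in Metric.closedBall x (4*R) \ Metric.ball x (3*R),
              ENNReal.ofReal (h x / (4*R)^N) := by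
              rw [setLIntegral_const, hann x]
          _ ≤ ∫⁻ y in Metric.closedBall x (4*R) \ Metric.ball x (3*R),
              ENNReal.ofReal (A (|u x - u y| / (lam * ‖x - y‖ ^ s)) / ‖x - y‖ ^ N) := by
              refine lintegral_mono_ae ?_
              filter_upwards [ae_restrict_mem (measurableSet_closedBall.diff measurableSet_ball),
                ae_restrict_of_ae hu0] with y hy hy0
              have hd1 : dist y x ≤ 4*R := Metric.mem_closedBall.mp hy.1
              have hd2 : 3*R ≤ dist y x := not_lt.mp (fun hc => hy.2 (Metric.mem_ball.mpr hc))
              have hyΩ : y ∉ Ω := by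
                intro hyΩ'
                have h1 : dist y 0 ≤ R := Metric.mem_closedBall.mp (hΩR hyΩ')
                have h2 : dist x 0 ≤ R := Metric.mem_closedBall.mp hxB
                have h3 := dist_triangle y (0:EuclideanSpace ℝ (Fin N)) x
                rw [dist_comm (0:EuclideanSpace ℝ (Fin N)) x] at h3
                linarith
              have huy : u y = 0 := hy0 hyΩ
              have hxy : ‖x - y‖ = dist y x := by rw [← dist_eq_norm, dist_comm]
              apply ENNReal.ofReal_le_ofReal
              have hr0 : (0:ℝ) < ‖x - y‖ := by rw [hxy]; linarith
              have hrs : ‖x - y‖ ^ s ≤ (4*R)^s :=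
                Real.rpow_le_rpow hr0.le (by rw [hxy]; exact hd1) hs.1.le
              have hrspos : 0 < ‖x-y‖ ^ s := Real.rpow_pos_of_pos hr0 s
              have harg : |u x| / (lam * (4*R)^s) ≤ |u x| / (lam * ‖x - y‖^s) :=
                div_le_div_of_nonneg_left (abs_nonneg _) (by positivity) (by nlinarith)
              have hAle : h x ≤ A (|u x| / (lam * ‖x - y‖^s)) := A_mono' hA (by positivity) harg
              rw [huy, sub_zero]
              exact div_le_div₀ (A_nonneg' hA (by positivity)) hAle (by positivity)
                (pow_le_pow_left₀ hr0.le (by rw [hxy]; exact hd1) N)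
          _ ≤ _ := setLIntegral_le_lintegral _ _
      · have hxΩ : x ∉ Ω := fun hc => hxB (hΩR hc)
        have hux : u x = 0 := hx hxΩ
        have hhx : h x = 0 := by rw [hhdef]; simp [hux, A_zero' hA]
        simp [hhx]
    have A2 : (∫⁻ x, ENNReal.ofReal (h x)) * c₁ ≤ 1 := by
      rw [← lintegral_mul_const' c₁ _ hc1top]
      exact le_trans (lintegral_mono_ae A1) Hle
    calc (∫⁻ x, ENNReal.ofReal (A (|u x| / (μ * lam))))
        ≤ ∫⁻ x, ENNReal.ofReal (h x) * ENNReal.ofReal (1/K) := by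
          refine lintegral_mono (fun x => ?_)
          rw [← ENNReal.ofReal_mul (hh0 x)]
          apply ENNReal.ofReal_le_ofReal
          have harg : |u x| / (μ * lam) = (|u x| / (lam * (4*R)^s)) / K := by
            rw [div_div]; congr 1; rw [hμdef]; ring
          rw [harg]
          calc A ((|u x| / (lam * (4*R)^s)) / K) ≤ h x / K := A_div_le' hA (by positivity) hK1
          _ = h x * (1/K) := by ring
      _ = (∫⁻ x, ENNReal.ofReal (h x)) * ENNReal.ofReal (1/K) :=
          lintegral_mul_const' _ _ ENNReal.ofReal_ne_top
      _ ≤ (∫⁻ x, ENNReal.ofReal (h x)) * c₁ := mul_le_mul_right hKc _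
      _ ≤ 1 := A2
  -- the admissible set for the Gagliardo seminorm is nonempty
  set Sg := {lam : ℝ | 0 < lam ∧ ∫⁻ x in Set.univ, ∫⁻ y in Set.univ,
    ENNReal.ofReal (A (|u x - u y| / (lam * ‖x - y‖ ^ s)) / ‖x - y‖ ^ N) ≤ 1} with hSgdef
  have hSgpos : ∀ l ∈ Sg, 0 < l := fun l hl => hl.1
  have hSgne : Sg.Nonempty := by
    set M := ∫⁻ x, ∫⁻ y, ENNReal.ofReal (A (lam0 * |u x - u y| / ‖x - y‖ ^ s) / ‖x - y‖ ^ N)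
      with hMdef
    set t : ℝ := max 1 M.toReal with htdef
    have ht1 : (1:ℝ) ≤ t := le_max_left _ _
    have ht0 : (0:ℝ) < t := lt_of_lt_of_le one_pos ht1
    have htM : M.toReal ≤ t := le_max_right _ _
    refine ⟨t / lam0, div_pos ht0 hlam0, ?_⟩
    simp only [Measure.restrict_univ]
    have hpt : ∀ x y : EuclideanSpace ℝ (Fin N),
        ENNReal.ofReal (A (|u x - u y| / (t / lam0 * ‖x - y‖ ^ s)) / ‖x - y‖ ^ N) ≤
        ENNReal.ofReal (1/t) *
          ENNReal.ofReal (A (lam0 * |u x - u y| / ‖x - y‖ ^ s) / ‖x - y‖ ^ N) := by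
      intro x y
      by_cases hxy : x = y
      · subst hxy
        simp [A_zero' hA, Real.zero_rpow hs.1.ne', zero_pow hN.ne']
      · have hr0 : (0:ℝ) < ‖x - y‖ := by
          rw [norm_pos_iff]; exact sub_ne_zero.mpr hxy
        have hrs : (0:ℝ) < ‖x - y‖ ^ s := Real.rpow_pos_of_pos hr0 s
        have harg : |u x - u y| / (t / lam0 * ‖x - y‖ ^ s)
            = (lam0 * |u x - u y| / ‖x - y‖ ^ s) / t := by
          field_simp
        rw [harg, ← ENNReal.ofReal_mul (by positivity)]
        apply ENNReal.ofReal_le_ofReal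
        have hdiv := A_div_le' hA (z := lam0 * |u x - u y| / ‖x - y‖ ^ s) (by positivity) ht1
        calc A ((lam0 * |u x - u y| / ‖x - y‖ ^ s) / t) / ‖x - y‖ ^ N
            ≤ (A (lam0 * |u x - u y| / ‖x - y‖ ^ s) / t) / ‖x - y‖ ^ N := by gcongr
          _ = 1/t * (A (lam0 * |u x - u y| / ‖x - y‖ ^ s) / ‖x - y‖ ^ N) := by ring
    calc (∫⁻ x, ∫⁻ y, ENNReal.ofReal (A (|u x - u y| / (t / lam0 * ‖x - y‖ ^ s)) / ‖x - y‖ ^ N))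
        ≤ ∫⁻ x, ∫⁻ y, ENNReal.ofReal (1/t) *
            ENNReal.ofReal (A (lam0 * |u x - u y| / ‖x - y‖ ^ s) / ‖x - y‖ ^ N) :=
          lintegral_mono fun x => lintegral_mono fun y => hpt x y
      _ = ENNReal.ofReal (1/t) * M := by
          simp_rw [lintegral_const_mul' (ENNReal.ofReal (1/t)) _ ENNReal.ofReal_ne_top]; rfl
      _ ≤ 1 := by
          rw [← ENNReal.ofReal_toReal hM.ne, ← ENNReal.ofReal_mul (by positivity)]
          refine ENNReal.ofReal_le_one.mpr ?_
          calc 1/t * M.toReal = M.toReal / t := by ring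
          _ ≤ 1 := (div_le_one ht0).mpr htM
  -- assembling
  have hbdd : BddBelow {lam : ℝ | 0 < lam ∧
      ∫⁻ x in Set.univ, ENNReal.ofReal (A (|u x| / lam)) ≤ 1} :=
    ⟨0, fun z hz => hz.1.le⟩
  have h1 : ∀ lam ∈ Sg, luxNorm A Set.univ u ≤ μ * lam := by
    intro lam hl
    refine csInf_le hbdd ?_
    refine ⟨mul_pos hμ hl.1, ?_⟩
    simp only [Measure.restrict_univ]
    exact key lam hl.1 (by simpa only [Measure.restrict_univ] using hl.2)
  have h2 : luxNorm A Set.univ u / μ ≤ sInf Sg :=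
    le_csInf hSgne fun l hl => (div_le_iff₀ hμ).mpr (by rw [mul_comm]; exact h1 l hl)
  have hgs : gaglSeminorm A s Set.univ u = sInf Sg := rfl
  calc luxNorm A Set.univ u = luxNorm A Set.univ u / μ * μ := by field_simp
    _ ≤ sInf Sg * μ := mul_le_mul_of_nonneg_right h2 hμ.le
    _ = μ * gaglSeminorm A s Set.univ u := by rw [hgs, mul_comm]


end
end

section
/- Let A be an N-function, s ∈ (0,1), and define δ(x) = min{1, |x|} for x ∈ ℝ^N. Then ∫_{ℝ^N} A(δ(x)/|x|^s)·|x|^{−N} dx < ∞; that is, the function x ↦ δ(x)/|x|^s belongs to the Orlicz space L_A(ℝ^N, |x|^{−N}dx). -/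
open MeasureTheory Filter Set
open scoped ENNReal NNReal RealInnerProductSpace

noncomputable section

section AuxLemmas

open MeasureTheory Measure Metric

private lemma nfun_zero' {A : ℝ → ℝ}
    (hcont : Continuous A)
    (htz : Tendsto (fun t => A t / t) (nhdsWithin 0 (Set.Ioi 0)) (nhds 0)) : A 0 = 0 := by
  have h1 : Tendsto (fun t : ℝ => A t / t * t) (nhdsWithin 0 (Set.Ioi 0)) (nhds 0) := by
    have := htz.mul ((continuous_id.tendsto (0:ℝ)).mono_left nhdsWithin_le_nhds)
    simpa using this
  have h2 : Tendsto A (nhdsWithin 0 (Set.Ioi 0)) (nhds (A 0)) :=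
    (hcont.tendsto 0).mono_left nhdsWithin_le_nhds
  have h3 : Tendsto A (nhdsWithin 0 (Set.Ioi 0)) (nhds 0) := by
    refine h1.congr' ?_
    filter_upwards [self_mem_nhdsWithin] with t ht
    exact div_mul_cancel₀ (A t) (ne_of_gt ht)
  exact tendsto_nhds_unique h2 h3

private lemma nfun_le' {A : ℝ → ℝ} (hconv : ConvexOn ℝ (Set.Ici 0) A) (hA0 : A 0 = 0)
    {t : ℝ} (h0 : 0 ≤ t) (h1 : t ≤ 1) : A t ≤ t * A 1 := by
  have := hconv.2 (Set.self_mem_Ici) (show (1:ℝ) ∈ Set.Ici 0 by norm_num)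
    (by linarith : (0:ℝ) ≤ 1 - t) h0 (by ring)
  simpa [hA0] using this

private lemma lintegral_fun_norm_haar' {E : Type*} [NormedAddCommGroup E] [NormedSpace ℝ E]
    [MeasurableSpace E] [BorelSpace E] [FiniteDimensional ℝ E] [Nontrivial E]
    (μ : Measure E) [μ.IsAddHaarMeasure] {F : ℝ → ℝ≥0∞} (hF : Measurable F) :
    ∫⁻ x, F ‖x‖ ∂μ = μ.toSphere univ *
      ∫⁻ y in Ioi (0:ℝ), ENNReal.ofReal (y ^ (Module.finrank ℝ E - 1)) * F y := by
  calc ∫⁻ x, F ‖x‖ ∂μ = ∫⁻ x in ({(0:E)}ᶜ : Set E), F ‖x‖ ∂μ := by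
        rw [restrict_compl_singleton]
    _ = ∫⁻ x : ({(0:E)}ᶜ : Set E), F ‖x.1‖ ∂(μ.comap Subtype.val) :=
        (lintegral_subtype_comap (measurableSet_singleton _).compl _).symm
    _ = ∫⁻ p : sphere (0:E) 1 × Ioi (0:ℝ), F p.2.1
          ∂(μ.toSphere.prod (volumeIoiPow (Module.finrank ℝ E - 1))) := by
        have := μ.measurePreserving_homeomorphUnitSphereProd.lintegral_comp
          (hF.comp (measurable_subtype_coe.comp measurable_snd))
        refine Eq.trans ?_ this
        congr 1
        ext x
        simp
    _ = μ.toSphere univ * ∫⁻ y : Ioi (0:ℝ), F y ∂(volumeIoiPow (Module.finrank ℝ E - 1)) := by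
        rw [lintegral_prod _ ((hF.comp' (measurable_subtype_coe.comp' measurable_snd) :
          Measurable fun p : sphere (0:E) 1 × Ioi (0:ℝ) => F p.2.1).aemeasurable)]
        simp [lintegral_const, mul_comm]
    _ = _ := by
        congr 1
        rw [volumeIoiPow, lintegral_withDensity_eq_lintegral_mul _
          ((measurable_subtype_coe.pow_const _).ennreal_ofReal)
          (hF.comp' measurable_subtype_coe : Measurable fun y : Ioi (0:ℝ) => F y.1)]
        exact lintegral_subtype_comap measurableSet_Ioi
          (fun y => ENNReal.ofReal (y ^ (Module.finrank ℝ E - 1)) * F y)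

end AuxLemmas

/-- `x ↦ δ(x)/|x|^s` with `δ(x) = min{1,|x|}` belongs to
`L_A(ℝ^N, |x|^{-N} dx)`. -/
theorem min_one_div_rpow_mem_LA {N : ℕ} (hN : 0 < N)
    (s : ℝ) (hs : s ∈ Set.Ioo (0:ℝ) 1) (A : ℝ → ℝ) (hA : IsNFunction A) :
    (∫⁻ x : EuclideanSpace ℝ (Fin N),
      ENNReal.ofReal (A (min 1 ‖x‖ / ‖x‖ ^ s) / ‖x‖ ^ N)) < ⊤ := by
  obtain ⟨hs0, hs1⟩ := hs
  haveI : Nontrivial (EuclideanSpace ℝ (Fin N)) :=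
    Module.nontrivial_of_finrank_pos (R := ℝ)
      (by rw [finrank_euclideanSpace_fin]; exact hN)
  have hA0 : A 0 = 0 := nfun_zero' hA.continuous hA.tendsto_zero
  set F : ℝ → ℝ≥0∞ := fun y => ENNReal.ofReal (A (min 1 y / y ^ s) / y ^ N) with hFdef
  have hFm : Measurable F := by
    apply Measurable.ennreal_ofReal
    apply Measurable.div
    · exact hA.continuous.measurable.comp
        ((measurable_const.min measurable_id).div (by fun_prop : Measurable fun y : ℝ => y ^ s))
    · exact measurable_id.pow_const N
  have goal_eq : (∫⁻ x : EuclideanSpace ℝ (Fin N),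
      ENNReal.ofReal (A (min 1 ‖x‖ / ‖x‖ ^ s) / ‖x‖ ^ N)) = ∫⁻ x, F ‖x‖ := rfl
  rw [goal_eq, lintegral_fun_norm_haar' _ hFm]
  have hrank : Module.finrank ℝ (EuclideanSpace ℝ (Fin N)) - 1 = N - 1 := by
    rw [finrank_euclideanSpace_fin]
  rw [hrank]
  refine ENNReal.mul_lt_top (measure_lt_top _ _) ?_
  -- the bounding function
  set g : ℝ → ℝ := fun y => A 1 * (min 1 y * y ^ (-1 - s)) with hgdef
  have hbound : ∀ y ∈ Set.Ioi (0:ℝ),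
      ENNReal.ofReal (y ^ (N - 1)) * F y ≤ ENNReal.ofReal (g y) := by
    intro y hy
    have hy0 : (0:ℝ) < y := hy
    have hys : (0:ℝ) < y ^ s := Real.rpow_pos_of_pos hy0 s
    have ht0 : 0 ≤ min 1 y / y ^ s :=
      div_nonneg (le_min zero_le_one hy0.le) hys.le
    have ht1 : min 1 y / y ^ s ≤ 1 := by
      rcases le_total y 1 with h | h
      · rw [min_eq_right h, div_le_one hys]
        calc y = y ^ (1:ℝ) := (Real.rpow_one y).symm
          _ ≤ y ^ s := Real.rpow_le_rpow_of_exponent_ge hy0 h hs1.le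
      · rw [min_eq_left h, div_le_one hys]
        calc (1:ℝ) = 1 ^ s := (Real.one_rpow s).symm
          _ ≤ y ^ s := Real.rpow_le_rpow zero_le_one h hs0.le
    have hAle : A (min 1 y / y ^ s) ≤ (min 1 y / y ^ s) * A 1 :=
      nfun_le' hA.convexOn hA0 ht0 ht1
    have hyN : (y:ℝ) ^ (N - 1) * y = y ^ N := by
      rw [← pow_succ, Nat.sub_add_cancel hN]
    rw [hFdef]
    rw [← ENNReal.ofReal_mul (by positivity : (0:ℝ) ≤ y ^ (N - 1))]
    apply ENNReal.ofReal_le_ofReal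
    calc y ^ (N - 1) * (A (min 1 y / y ^ s) / y ^ N)
        ≤ y ^ (N - 1) * ((min 1 y / y ^ s) * A 1 / y ^ N) := by
          gcongr
      _ = g y := by
          show _ = A 1 * (min 1 y * y ^ (-1 - s))
          rw [show (-1 - s : ℝ) = -(1 + s) by ring,
            Real.rpow_neg hy0.le, Real.rpow_add hy0, Real.rpow_one, ← hyN]
          have hN1 : (0:ℝ) < y ^ (N - 1) := by positivity
          field_simp
  have hg_int : IntegrableOn g (Set.Ioi (0:ℝ)) := by
    have h1 : IntegrableOn (fun y : ℝ => min 1 y * y ^ (-1 - s)) (Set.Ioc 0 1) := by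
      have hbase : IntegrableOn (fun y : ℝ => y ^ (-s)) (Set.Ioc 0 1) := by
        rw [← intervalIntegrable_iff_integrableOn_Ioc_of_le zero_le_one]
        exact intervalIntegral.intervalIntegrable_rpow' (by linarith)
      apply hbase.congr_fun ?_ measurableSet_Ioc
      intro y hy
      show y ^ (-s) = min 1 y * y ^ (-1 - s)
      rw [min_eq_right hy.2,
        show (-s : ℝ) = 1 + (-1 - s) by ring, Real.rpow_add hy.1, Real.rpow_one]
    have h2 : IntegrableOn (fun y : ℝ => min 1 y * y ^ (-1 - s)) (Set.Ioi 1) := by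
      apply (integrableOn_Ioi_rpow_of_lt (by linarith : -1 - s < -1) one_pos).congr_fun
        ?_ measurableSet_Ioi
      intro y hy
      show y ^ (-1 - s) = min 1 y * y ^ (-1 - s)
      rw [min_eq_left (le_of_lt hy), one_mul]
    have h3 : IntegrableOn (fun y : ℝ => min 1 y * y ^ (-1 - s)) (Set.Ioi 0) := by
      rw [show Set.Ioi (0:ℝ) = Set.Ioc 0 1 ∪ Set.Ioi 1 from
        (Set.Ioc_union_Ioi_eq_Ioi zero_le_one).symm]
      exact h1.union h2
    exact h3.const_mul (A 1)
  calc ∫⁻ y in Set.Ioi (0:ℝ), ENNReal.ofReal (y ^ (N - 1)) * F y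
      ≤ ∫⁻ y in Set.Ioi (0:ℝ), ENNReal.ofReal (g y) :=
        setLIntegral_mono' measurableSet_Ioi hbound
    _ < ⊤ := hg_int.setLIntegral_lt_top

end
end

section
/- Let Ω be an open subset of ℝ^N, s ∈ (0,1), and A an N-function with derivative a satisfying 1 < p₀ := inf_{t>0} t·a(t)/A(t) ≤ p⁰ := sup_{t>0} t·a(t)/A(t) < ∞. Set φ(u) = ∫_Ω∫_Ω A(|u(x)−u(y)|/|x−y|^s) dx dy/|x−y|^N. Then for every u ∈ W^sL_A(Ω) with [u]_{s,A} > 1, one has [u]_{s,A}^{p₀} ≤ φ(u) ≤ [u]_{s,A}^{p⁰}. -/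
open MeasureTheory Filter Set
open scoped ENNReal NNReal RealInnerProductSpace

noncomputable section

namespace OrliczAux


variable {A a : ℝ → ℝ}

lemma a_nonneg (hAa : IsNFunctionDeriv A a) {t : ℝ} (ht : 0 ≤ t) : 0 ≤ a t := by
  have := hAa.monotone (mem_Ici.2 (le_refl (0:ℝ))) (mem_Ici.2 ht) ht
  rw [hAa.zero] at this; exact this

lemma aext_mono (hAa : IsNFunctionDeriv A a) : Monotone (fun t => a (max t 0)) :=
  fun x y hxy => hAa.monotone (mem_Ici.2 (le_max_right _ _)) (mem_Ici.2 (le_max_right _ _))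
    (max_le_max hxy le_rfl)

lemma A_eq (hAa : IsNFunctionDeriv A a) {t : ℝ} (ht : 0 ≤ t) :
    A t = ∫ s in (0:ℝ)..t, a (max s 0) := by
  rw [hAa.eq_integral t ht]
  apply intervalIntegral.integral_congr
  intro x hx
  rw [uIcc_of_le ht] at hx
  simp [max_eq_left hx.1]

lemma A_zero (hAa : IsNFunctionDeriv A a) : A 0 = 0 := by
  simpa using hAa.eq_integral 0 le_rfl

lemma A_nonneg (hAa : IsNFunctionDeriv A a) {t : ℝ} (ht : 0 ≤ t) : 0 ≤ A t := by
  rw [A_eq hAa ht]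
  apply intervalIntegral.integral_nonneg ht
  intro s _
  exact a_nonneg hAa (le_max_right _ _)

lemma A_hasDerivWithinAt (hAa : IsNFunctionDeriv A a) {x : ℝ} (hx : 0 ≤ x) :
    HasDerivWithinAt A (a x) (Ici x) x := by
  have hint : IntervalIntegrable (fun s => a (max s 0)) volume 0 x :=
    (aext_mono hAa).intervalIntegrable
  have hmeas : StronglyMeasurableAtFilter (fun s => a (max s 0)) (nhdsWithin x (Ioi x)) volume :=
    ⟨univ, univ_mem, ((aext_mono hAa).measurable).aestronglyMeasurable⟩
  have hcont : ContinuousWithinAt (fun s => a (max s 0)) (Ioi x) x := by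
    apply ((hAa.rightCont x hx).mono Ioi_subset_Ici_self).congr
    · intro y hy; simp [max_eq_left (hx.trans hy.le)]
    · simp [max_eq_left hx]
  have h := intervalIntegral.integral_hasDerivWithinAt_right (s := Ici x) (t := Ioi x)
    hint hmeas hcont
  rw [max_eq_left hx] at h
  exact h.congr (fun y hy => A_eq hAa (hx.trans hy)) (A_eq hAa hx)

lemma F_mono (hAa : IsNFunctionDeriv A a) {p : ℝ}
    (hlow : ∀ t, 0 < t → p * A t ≤ t * a t) {t₀ t₁ : ℝ} (h0 : 0 < t₀) (h01 : t₀ ≤ t₁) :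
    A t₀ * t₀ ^ (-p) ≤ A t₁ * t₁ ^ (-p) := by
  have key : ∀ ⦃x⦄, x ∈ Icc t₀ t₁ → A t₀ * t₀ ^ (-p) ≤ A x * x ^ (-p) := by
    apply image_le_of_deriv_right_le_deriv_boundary (f := fun _ => A t₀ * t₀ ^ (-p))
      (f' := fun _ => 0) (B := fun t => A t * t ^ (-p))
      (B' := fun x => a x * x ^ (-p) + A x * (-p * x ^ (-p - 1)))
    · exact continuousOn_const
    · intro x _; exact hasDerivWithinAt_const x _ _
    · exact le_rfl
    · intro x hx
      exact (hAa.toIsNFunction.continuous.continuousAt.continuousWithinAt).mul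
        ((Real.continuousAt_rpow_const x (-p) (Or.inl (h0.trans_le hx.1).ne')).continuousWithinAt)
    · intro x hx
      have hxpos : 0 < x := h0.trans_le hx.1
      exact (A_hasDerivWithinAt hAa hxpos.le).mul
        ((Real.hasDerivAt_rpow_const (Or.inl hxpos.ne')).hasDerivWithinAt)
    · intro x hx
      have hxpos : 0 < x := h0.trans_le hx.1
      have e : x ^ (-p) = x ^ (-p - 1) * x := by
        rw [← Real.rpow_add_one hxpos.ne' (-p - 1)]; ring_nf
      have h := hlow x hxpos
      have hr : (0:ℝ) ≤ x ^ (-p - 1) := Real.rpow_nonneg hxpos.le _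
      calc (0:ℝ) ≤ x ^ (-p - 1) * (x * a x - p * A x) := mul_nonneg hr (by linarith)
        _ = a x * x ^ (-p) + A x * (-p * x ^ (-p - 1)) := by rw [e]; ring
  exact key ⟨h01, le_rfl⟩

lemma G_anti (hAa : IsNFunctionDeriv A a) {q : ℝ}
    (hup : ∀ t, 0 < t → t * a t ≤ q * A t) {t₀ t₁ : ℝ} (h0 : 0 < t₀) (h01 : t₀ ≤ t₁) :
    A t₁ * t₁ ^ (-q) ≤ A t₀ * t₀ ^ (-q) := by
  have key : ∀ ⦃x⦄, x ∈ Icc t₀ t₁ → A x * x ^ (-q) ≤ A t₀ * t₀ ^ (-q) := by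
    apply image_le_of_deriv_right_le_deriv_boundary (f := fun t => A t * t ^ (-q))
      (f' := fun x => a x * x ^ (-q) + A x * (-q * x ^ (-q - 1)))
      (B := fun _ => A t₀ * t₀ ^ (-q)) (B' := fun _ => 0)
    · intro x hx
      exact (hAa.toIsNFunction.continuous.continuousAt.continuousWithinAt).mul
        ((Real.continuousAt_rpow_const x (-q) (Or.inl (h0.trans_le hx.1).ne')).continuousWithinAt)
    · intro x hx
      have hxpos : 0 < x := h0.trans_le hx.1
      exact (A_hasDerivWithinAt hAa hxpos.le).mul
        ((Real.hasDerivAt_rpow_const (Or.inl hxpos.ne')).hasDerivWithinAt)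
    · exact le_rfl
    · exact continuousOn_const
    · intro x _; exact hasDerivWithinAt_const x _ _
    · intro x hx
      have hxpos : 0 < x := h0.trans_le hx.1
      have e : x ^ (-q) = x ^ (-q - 1) * x := by
        rw [← Real.rpow_add_one hxpos.ne' (-q - 1)]; ring_nf
      have h := hup x hxpos
      have hr : (0:ℝ) ≤ x ^ (-q - 1) := Real.rpow_nonneg hxpos.le _
      calc a x * x ^ (-q) + A x * (-q * x ^ (-q - 1))
          = x ^ (-q - 1) * (x * a x - q * A x) := by rw [e]; ring
        _ ≤ 0 := mul_nonpos_of_nonneg_of_nonpos hr (by linarith)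
  exact key ⟨h01, le_rfl⟩

lemma A_scale (hAa : IsNFunctionDeriv A a) {p q : ℝ}
    (hlow : ∀ t, 0 < t → p * A t ≤ t * a t) (hup : ∀ t, 0 < t → t * a t ≤ q * A t)
    {σ t : ℝ} (hσ : 1 ≤ σ) (ht : 0 ≤ t) :
    σ ^ p * A t ≤ A (σ * t) ∧ A (σ * t) ≤ σ ^ q * A t := by
  have hσ0 : (0:ℝ) < σ := lt_of_lt_of_le one_pos hσ
  rcases ht.eq_or_lt with h0 | htpos
  · simp [← h0, A_zero hAa]
  · have hst : t ≤ σ * t := le_mul_of_one_le_left htpos.le hσ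
    have hσt : 0 < σ * t := mul_pos hσ0 htpos
    have hP : (0:ℝ) < t ^ p := Real.rpow_pos_of_pos htpos p
    have hQ : (0:ℝ) < t ^ q := Real.rpow_pos_of_pos htpos q
    have hSp : (0:ℝ) < σ ^ p := Real.rpow_pos_of_pos hσ0 p
    have hSq : (0:ℝ) < σ ^ q := Real.rpow_pos_of_pos hσ0 q
    constructor
    · have h1 := F_mono hAa hlow htpos hst
      rw [Real.mul_rpow hσ0.le htpos.le, Real.rpow_neg hσ0.le, Real.rpow_neg htpos.le] at h1
      have h2 := mul_le_mul_of_nonneg_right h1 (mul_pos hP hSp).le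
      calc σ ^ p * A t = A t * (t ^ p)⁻¹ * (t ^ p * σ ^ p) := by
            field_simp
        _ ≤ A (σ * t) * ((σ ^ p)⁻¹ * (t ^ p)⁻¹) * (t ^ p * σ ^ p) := h2
        _ = A (σ * t) := by field_simp
    · have h1 := G_anti hAa hup htpos hst
      rw [Real.mul_rpow hσ0.le htpos.le, Real.rpow_neg hσ0.le, Real.rpow_neg htpos.le] at h1
      have h2 := mul_le_mul_of_nonneg_right h1 (mul_pos hQ hSq).le
      calc A (σ * t) = A (σ * t) * ((σ ^ q)⁻¹ * (t ^ q)⁻¹) * (t ^ q * σ ^ q) := by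
            field_simp
        _ ≤ A t * (t ^ q)⁻¹ * (t ^ q * σ ^ q) := h2
        _ = σ ^ q * A t := by field_simp





lemma div_le_div_nonneg_right' {x y c : ℝ} (h : x ≤ y) (hc : 0 ≤ c) : x / c ≤ y / c := by
  rcases hc.eq_or_lt with h0 | h0
  · simp [← h0]
  · exact (div_le_div_iff_of_pos_right h0).2 h

def Phi {N : ℕ} (A : ℝ → ℝ) (s : ℝ) (Ω : Set (EuclideanSpace ℝ (Fin N)))
    (u : EuclideanSpace ℝ (Fin N) → ℝ) (lam : ℝ) : ℝ≥0∞ :=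
  ∫⁻ x in Ω, ∫⁻ y in Ω,
    ENNReal.ofReal (A (|u x - u y| / (lam * ‖x - y‖ ^ s)) / ‖x - y‖ ^ N)

lemma Phi_scale {N : ℕ} {A a : ℝ → ℝ} (hAa : IsNFunctionDeriv A a) {p q : ℝ}
    (hlow : ∀ t, 0 < t → p * A t ≤ t * a t) (hup : ∀ t, 0 < t → t * a t ≤ q * A t)
    (s : ℝ) (Ω : Set (EuclideanSpace ℝ (Fin N))) (u : EuclideanSpace ℝ (Fin N) → ℝ)
    {σ μ : ℝ} (hσ : 1 ≤ σ) (hμ : 0 < μ) :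
    ENNReal.ofReal (σ ^ p) * Phi A s Ω u (σ * μ) ≤ Phi A s Ω u μ ∧
      Phi A s Ω u μ ≤ ENNReal.ofReal (σ ^ q) * Phi A s Ω u (σ * μ) := by
  have hσ0 : (0:ℝ) < σ := lt_of_lt_of_le one_pos hσ
  have point : ∀ x y : EuclideanSpace ℝ (Fin N),
      (ENNReal.ofReal (σ ^ p) *
          ENNReal.ofReal (A (|u x - u y| / (σ * μ * ‖x - y‖ ^ s)) / ‖x - y‖ ^ N) ≤
        ENNReal.ofReal (A (|u x - u y| / (μ * ‖x - y‖ ^ s)) / ‖x - y‖ ^ N)) ∧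
      (ENNReal.ofReal (A (|u x - u y| / (μ * ‖x - y‖ ^ s)) / ‖x - y‖ ^ N) ≤
        ENNReal.ofReal (σ ^ q) *
          ENNReal.ofReal (A (|u x - u y| / (σ * μ * ‖x - y‖ ^ s)) / ‖x - y‖ ^ N)) := by
    intro x y
    set d := |u x - u y| with hd_def
    set r := ‖x - y‖ with hr_def
    have hd : 0 ≤ d := abs_nonneg _
    have hr : 0 ≤ r := norm_nonneg _
    set t := d / (μ * r ^ s) with ht_def
    have ht : 0 ≤ t := div_nonneg hd (mul_nonneg hμ.le (Real.rpow_nonneg hr s))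
    have harg : d / (σ * μ * r ^ s) = t / σ := by
      rw [ht_def, div_div]; congr 1; ring
    have htσ : 0 ≤ t / σ := div_nonneg ht hσ0.le
    have hkey := A_scale hAa hlow hup hσ htσ
    rw [mul_div_cancel₀ t hσ0.ne'] at hkey
    have hrN : (0:ℝ) ≤ r ^ N := pow_nonneg hr N
    constructor
    · rw [harg, ← ENNReal.ofReal_mul (Real.rpow_nonneg hσ0.le p)]
      apply ENNReal.ofReal_le_ofReal
      rw [← mul_div_assoc]
      exact div_le_div_nonneg_right' hkey.1 hrN
    · rw [harg, ← ENNReal.ofReal_mul (Real.rpow_nonneg hσ0.le q)]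
      apply ENNReal.ofReal_le_ofReal
      rw [← mul_div_assoc]
      exact div_le_div_nonneg_right' hkey.2 hrN
  constructor
  · calc ENNReal.ofReal (σ ^ p) * Phi A s Ω u (σ * μ)
        = ∫⁻ x in Ω, ENNReal.ofReal (σ ^ p) * ∫⁻ y in Ω,
            ENNReal.ofReal (A (|u x - u y| / (σ * μ * ‖x - y‖ ^ s)) / ‖x - y‖ ^ N) :=
          (lintegral_const_mul' _ _ ENNReal.ofReal_ne_top).symm
      _ = ∫⁻ x in Ω, ∫⁻ y in Ω, ENNReal.ofReal (σ ^ p) *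
            ENNReal.ofReal (A (|u x - u y| / (σ * μ * ‖x - y‖ ^ s)) / ‖x - y‖ ^ N) :=
          lintegral_congr fun x => (lintegral_const_mul' _ _ ENNReal.ofReal_ne_top).symm
      _ ≤ Phi A s Ω u μ := lintegral_mono fun x => lintegral_mono fun y => (point x y).1
  · calc Phi A s Ω u μ
        ≤ ∫⁻ x in Ω, ∫⁻ y in Ω, ENNReal.ofReal (σ ^ q) *
            ENNReal.ofReal (A (|u x - u y| / (σ * μ * ‖x - y‖ ^ s)) / ‖x - y‖ ^ N) :=
          lintegral_mono fun x => lintegral_mono fun y => (point x y).2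
      _ = ∫⁻ x in Ω, ENNReal.ofReal (σ ^ q) * ∫⁻ y in Ω,
            ENNReal.ofReal (A (|u x - u y| / (σ * μ * ‖x - y‖ ^ s)) / ‖x - y‖ ^ N) :=
          lintegral_congr fun x => lintegral_const_mul' _ _ ENNReal.ofReal_ne_top
      _ = ENNReal.ofReal (σ ^ q) * Phi A s Ω u (σ * μ) :=
          lintegral_const_mul' _ _ ENNReal.ofReal_ne_top


end OrliczAux

/-- if `[u]_{s,A} > 1` then `[u]^{p₀} ≤ φ(u) ≤ [u]^{p⁰}`. -/

theorem modular_bounds_of_seminorm_gt_one {N : ℕ} (hN : 0 < N)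
    (Ω : Set (EuclideanSpace ℝ (Fin N))) (hΩ : IsOpen Ω)
    (s : ℝ) (hs : s ∈ Set.Ioo (0:ℝ) 1) (A a : ℝ → ℝ)
    (hAa : IsNFunctionDeriv A a)
    (hp0 : 1 < sInf (ratioSet A a)) (hbdd : BddAbove (ratioSet A a))
    (u : EuclideanSpace ℝ (Fin N) → ℝ) (hu : MemWsLA A s Ω u)
    (hgt : 1 < gaglSeminorm A s Ω u) :
    ENNReal.ofReal (gaglSeminorm A s Ω u ^ sInf (ratioSet A a)) ≤ gaglModular A s Ω u ∧
      gaglModular A s Ω u ≤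
        ENNReal.ofReal (gaglSeminorm A s Ω u ^ sSup (ratioSet A a)) := by
  classical
  open OrliczAux in
  obtain ⟨hmem, lam0, hlam0, hfin⟩ := hu
  set p := sInf (ratioSet A a) with hp_def
  set q := sSup (ratioSet A a) with hq_def
  have hbb : BddBelow (ratioSet A a) := by
    refine ⟨0, ?_⟩
    rintro r ⟨t, ht, rfl⟩
    exact div_nonneg (mul_nonneg ht.le (a_nonneg hAa ht.le)) (A_nonneg hAa ht.le)
  have hne : (ratioSet A a).Nonempty := ⟨1 * a 1 / A 1, 1, one_pos, rfl⟩
  have hq1 : 1 < q := lt_of_lt_of_le hp0 (csInf_le_csSup hne hbb hbdd)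
  have hppos : (0:ℝ) < p := lt_trans one_pos hp0
  have hqpos : (0:ℝ) < q := lt_trans one_pos hq1
  have hlow : ∀ t, 0 < t → p * A t ≤ t * a t := by
    intro t ht
    have hAt := hAa.toIsNFunction.pos t ht
    have h : p ≤ t * a t / A t := csInf_le hbb ⟨t, ht, rfl⟩
    calc p * A t ≤ t * a t / A t * A t := mul_le_mul_of_nonneg_right h hAt.le
      _ = t * a t := div_mul_cancel₀ _ hAt.ne'
  have hup : ∀ t, 0 < t → t * a t ≤ q * A t := by
    intro t ht
    have hAt := hAa.toIsNFunction.pos t ht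
    have h : t * a t / A t ≤ q := le_csSup hbdd ⟨t, ht, rfl⟩
    calc t * a t = t * a t / A t * A t := (div_mul_cancel₀ _ hAt.ne').symm
      _ ≤ q * A t := mul_le_mul_of_nonneg_right h hAt.le
  set S : Set ℝ := {lam | 0 < lam ∧ Phi A s Ω u lam ≤ 1} with hS_def
  have hLS : gaglSeminorm A s Ω u = sInf S := rfl
  have hSbb : BddBelow S := ⟨0, fun x hx => hx.1.le⟩
  -- S is nonempty
  have hfin' : Phi A s Ω u (1 / lam0) < ⊤ := by
    have heq : Phi A s Ω u (1 / lam0) = ∫⁻ x in Ω, ∫⁻ y in Ω,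
        ENNReal.ofReal (A (lam0 * |u x - u y| / ‖x - y‖ ^ s) / ‖x - y‖ ^ N) := by
      unfold Phi
      refine lintegral_congr fun x => lintegral_congr fun y => ?_
      rw [show |u x - u y| / (1 / lam0 * ‖x - y‖ ^ s)
          = lam0 * |u x - u y| / ‖x - y‖ ^ s from by
        rw [one_div, inv_mul_eq_div, div_div_eq_mul_div, mul_comm (|u x - u y|) lam0]]
    rw [heq]; exact hfin
  set M := (Phi A s Ω u (1 / lam0)).toReal with hM_def
  have hM0 : 0 ≤ M := ENNReal.toReal_nonneg
  have hMeq : Phi A s Ω u (1 / lam0) = ENNReal.ofReal M := (ENNReal.ofReal_toReal hfin'.ne).symm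
  set σ0 := max 1 (M ^ p⁻¹) with hσ0_def
  have hσ0 : 1 ≤ σ0 := le_max_left _ _
  have hσ0pos : (0:ℝ) < σ0 := lt_of_lt_of_le one_pos hσ0
  have hσ0p : M ≤ σ0 ^ p := by
    calc M = (M ^ p⁻¹) ^ p := by
          rw [← Real.rpow_mul hM0, inv_mul_cancel₀ hppos.ne', Real.rpow_one]
      _ ≤ σ0 ^ p := Real.rpow_le_rpow (Real.rpow_nonneg hM0 _) (le_max_right _ _) hppos.le
  have hSne : S.Nonempty := by
    refine ⟨σ0 * (1 / lam0), mul_pos hσ0pos (by positivity), ?_⟩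
    have hsc := (Phi_scale hAa hlow hup s Ω u hσ0 (by positivity : (0:ℝ) < 1 / lam0)).1
    have h2 : ENNReal.ofReal (σ0 ^ p) * Phi A s Ω u (σ0 * (1 / lam0))
        ≤ ENNReal.ofReal (σ0 ^ p) * 1 := by
      rw [mul_one]
      calc ENNReal.ofReal (σ0 ^ p) * Phi A s Ω u (σ0 * (1 / lam0))
          ≤ Phi A s Ω u (1 / lam0) := hsc
        _ = ENNReal.ofReal M := hMeq
        _ ≤ ENNReal.ofReal (σ0 ^ p) := ENNReal.ofReal_le_ofReal hσ0p
    exact (ENNReal.mul_le_mul_iff_right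
      (ENNReal.ofReal_pos.2 (Real.rpow_pos_of_pos hσ0pos p)).ne' ENNReal.ofReal_ne_top).1 h2
  have hΦmod : Phi A s Ω u 1 = gaglModular A s Ω u := by
    unfold Phi gaglModular; simp only [one_mul]
  have hLpos : (0:ℝ) < gaglSeminorm A s Ω u := lt_trans one_pos hgt
  constructor
  · -- lower bound
    have hlb : ∀ lam ∈ Ioo (1:ℝ) (gaglSeminorm A s Ω u),
        ENNReal.ofReal (lam ^ p) ≤ gaglModular A s Ω u := by
      rintro lam ⟨h1, h2⟩
      have hlamS : lam ∉ S := by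
        intro hmemS
        have := csInf_le hSbb hmemS
        rw [← hLS] at this
        exact absurd this (not_le.2 h2)
      have hΦgt : 1 < Phi A s Ω u lam := by
        by_contra hle
        exact hlamS ⟨lt_trans one_pos h1, not_lt.1 hle⟩
      have hsc := (Phi_scale hAa hlow hup s Ω u h1.le one_pos).1
      rw [mul_one] at hsc
      calc ENNReal.ofReal (lam ^ p) = ENNReal.ofReal (lam ^ p) * 1 := (mul_one _).symm
        _ ≤ ENNReal.ofReal (lam ^ p) * Phi A s Ω u lam := mul_le_mul_right hΦgt.le _
        _ ≤ Phi A s Ω u 1 := hsc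
        _ = gaglModular A s Ω u := hΦmod
    have tendL : Tendsto (fun lam : ℝ => ENNReal.ofReal (lam ^ p))
        (nhdsWithin (gaglSeminorm A s Ω u) (Iio (gaglSeminorm A s Ω u)))
        (nhds (ENNReal.ofReal (gaglSeminorm A s Ω u ^ p))) :=
      ((ENNReal.continuous_ofReal.continuousAt.comp
        (Real.continuousAt_rpow_const _ p (Or.inl hLpos.ne'))).tendsto).mono_left
        nhdsWithin_le_nhds
    refine le_of_tendsto tendL ?_
    filter_upwards [Ioo_mem_nhdsLT_of_mem (⟨hgt, le_rfl⟩ :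
      gaglSeminorm A s Ω u ∈ Ioc 1 (gaglSeminorm A s Ω u))] with lam hlam
    exact hlb lam hlam
  · -- upper bound
    have hub : ∀ lam, gaglSeminorm A s Ω u < lam →
        gaglModular A s Ω u ≤ ENNReal.ofReal (lam ^ q) := by
      intro lam hlam
      rw [hLS] at hlam
      obtain ⟨lam', hlam'S, hlam'lt⟩ := (csInf_lt_iff hSbb hSne).1 hlam
      have h1lam' : 1 < lam' := by
        have := csInf_le hSbb hlam'S
        rw [← hLS] at this
        exact lt_of_lt_of_le hgt this
      have hsc := (Phi_scale hAa hlow hup s Ω u h1lam'.le one_pos).2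
      rw [mul_one] at hsc
      calc gaglModular A s Ω u = Phi A s Ω u 1 := hΦmod.symm
        _ ≤ ENNReal.ofReal (lam' ^ q) * Phi A s Ω u lam' := hsc
        _ ≤ ENNReal.ofReal (lam' ^ q) * 1 := mul_le_mul_right hlam'S.2 _
        _ = ENNReal.ofReal (lam' ^ q) := mul_one _
        _ ≤ ENNReal.ofReal (lam ^ q) := ENNReal.ofReal_le_ofReal
            (Real.rpow_le_rpow (by linarith) hlam'lt.le hqpos.le)
    have tendU : Tendsto (fun lam : ℝ => ENNReal.ofReal (lam ^ q))
        (nhdsWithin (gaglSeminorm A s Ω u) (Ioi (gaglSeminorm A s Ω u)))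
        (nhds (ENNReal.ofReal (gaglSeminorm A s Ω u ^ q))) :=
      ((ENNReal.continuous_ofReal.continuousAt.comp
        (Real.continuousAt_rpow_const _ q (Or.inl hLpos.ne'))).tendsto).mono_left
        nhdsWithin_le_nhds
    refine ge_of_tendsto tendU ?_
    filter_upwards [self_mem_nhdsWithin] with lam hlam
    exact hub lam hlam

end
end

section
/- Let Ω be an open subset of ℝ^N, s ∈ (0,1), and A an N-function with derivative a satisfying 1 < p₀ := inf_{t>0} t·a(t)/A(t) ≤ p⁰ := sup_{t>0} t·a(t)/A(t) < ∞. Set φ(u) = ∫_Ω∫_Ω A(|u(x)−u(y)|/|x−y|^s) dx dy/|x−y|^N. Then for every u ∈ W^sL_A(Ω) with [u]_{s,A} < 1, one has [u]_{s,A}^{p⁰} ≤ φ(u) ≤ [u]_{s,A}^{p₀}. -/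
open MeasureTheory Filter Set
open scoped ENNReal NNReal RealInnerProductSpace

noncomputable section

namespace NFunAux

variable {A a : ℝ → ℝ}

/-- modified density -/
def a' (a : ℝ → ℝ) : ℝ → ℝ := fun x => a (max x 0)

lemma a'_mono (h : IsNFunctionDeriv A a) : Monotone (a' a) := fun x y hxy =>
  h.monotone (le_max_right x 0) (le_max_right y 0) (max_le_max hxy le_rfl)

lemma a'_nonneg (h : IsNFunctionDeriv A a) (x : ℝ) : 0 ≤ a' a x := by
  have := h.monotone (le_refl (0:ℝ)) (le_max_right x 0) (le_max_right x 0)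
  simpa [h.zero, a'] using this

lemma a'_eq {x : ℝ} (hx : 0 ≤ x) : a' a x = a x := by
  simp [a', max_eq_left hx]

lemma A_eq_int (h : IsNFunctionDeriv A a) {x : ℝ} (hx : 0 ≤ x) :
    A x = ∫ s in (0:ℝ)..x, a' a s := by
  rw [h.eq_integral x hx]
  apply intervalIntegral.integral_congr
  intro s hsm
  rw [Set.uIcc_of_le hx] at hsm
  exact (a'_eq hsm.1).symm

lemma A_zero (h : IsNFunctionDeriv A a) : A 0 = 0 := by
  simpa using h.eq_integral 0 le_rfl

lemma A_mono (h : IsNFunctionDeriv A a) : MonotoneOn A (Set.Ici 0) := by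
  intro x hx y hy hxy
  rw [A_eq_int h hx, A_eq_int h hy, ← sub_nonneg,
    intervalIntegral.integral_interval_sub_left
      ((a'_mono h).intervalIntegrable (a := 0) (b := y))
      ((a'_mono h).intervalIntegrable (a := 0) (b := x))]
  exact intervalIntegral.integral_nonneg hxy fun s _ => a'_nonneg h s

lemma A_nonneg (h : IsNFunctionDeriv A a) {x : ℝ} (hx : 0 ≤ x) : 0 ≤ A x := by
  have := A_mono h (self_mem_Ici) hx hx
  simpa [A_zero h] using this

/-- right derivative of A -/
lemma A_rderiv (h : IsNFunctionDeriv A a) {y : ℝ} (hy : 0 ≤ y) :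
    HasDerivWithinAt A (a y) (Set.Ici y) y := by
  have hint : IntervalIntegrable (a' a) volume 0 y := (a'_mono h).intervalIntegrable
  have hmeas : StronglyMeasurableAtFilter (a' a) (nhdsWithin y (Set.Ioi y)) :=
    ⟨Set.univ, Filter.univ_mem, ((a'_mono h).measurable).aestronglyMeasurable⟩
  have hcont : ContinuousWithinAt (a' a) (Set.Ioi y) y := by
    apply ContinuousWithinAt.mono _ Set.Ioi_subset_Ici_self
    exact ((h.rightCont y hy).congr (fun x hx => a'_eq (le_trans hy hx))
      (a'_eq hy) : ContinuousWithinAt (a' a) (Set.Ici y) y)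
  have hF : HasDerivWithinAt (fun x => ∫ s in (0:ℝ)..x, a' a s) (a' a y) (Set.Ici y) y :=
    intervalIntegral.integral_hasDerivWithinAt_right hint hmeas hcont
  rw [a'_eq hy] at hF
  exact hF.congr (fun x hx => A_eq_int h (le_trans hy hx)) (A_eq_int h hy)

/-- derivative computation for `G x = A (x*t) * x^(-p)` -/
lemma G_rderiv (h : IsNFunctionDeriv A a) {t : ℝ} (ht : 0 < t) (p : ℝ)
    {x : ℝ} (hx : 0 < x) :
    HasDerivWithinAt (fun w => A (w * t) * w ^ (-p))
      (a (x * t) * t * x ^ (-p) + A (x * t) * (-p * x ^ (-p - 1)))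
      (Set.Ici x) x := by
  have h1 : HasDerivWithinAt (fun w => A (w * t)) (a (x * t) * t) (Set.Ici x) x := by
    have hin : HasDerivWithinAt (fun w : ℝ => w * t) t (Set.Ici x) x :=
      (hasDerivAt_mul_const t).hasDerivWithinAt
    have hmaps : Set.MapsTo (fun w : ℝ => w * t) (Set.Ici x) (Set.Ici (x * t)) :=
      fun w hw => mul_le_mul_of_nonneg_right hw ht.le
    have hA := A_rderiv h (mul_nonneg hx.le ht.le)
    simpa [mul_comm, Function.comp_def] using HasDerivWithinAt.comp x hA hin hmaps
  have h2 : HasDerivWithinAt (fun w : ℝ => w ^ (-p)) (-p * x ^ (-p - 1)) (Set.Ici x) x := by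
    simpa using (Real.hasDerivAt_rpow_const (p := -p) (Or.inl hx.ne')).hasDerivWithinAt
  exact h1.mul h2

lemma G_cont (h : IsNFunctionDeriv A a) (t p σ : ℝ) (hσ : 0 < σ) :
    ContinuousOn (fun w => A (w * t) * w ^ (-p)) (Set.Icc σ 1) := by
  intro x hx
  have hx0 : (0:ℝ) < x := lt_of_lt_of_le hσ hx.1
  apply ContinuousAt.continuousWithinAt
  exact ((h.toIsNFunction.continuous.comp (continuous_mul_right t)).continuousAt).mul
    (Real.continuousAt_rpow_const x (-p) (Or.inl hx0.ne'))

/-- A(σt) ≤ σ^p A(t) for 0 < σ ≤ 1, given p A(y) ≤ y a(y) on (0,∞). -/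
lemma scale_upper (h : IsNFunctionDeriv A a) {p : ℝ}
    (hp : ∀ y > (0:ℝ), p * A y ≤ y * a y)
    {t σ : ℝ} (ht : 0 < t) (hσ : 0 < σ) (hσ1 : σ ≤ 1) :
    A (σ * t) ≤ σ ^ p * A t := by
  set G : ℝ → ℝ := fun w => A (w * t) * w ^ (-p) with hG
  set g' : ℝ → ℝ := fun x => a (x * t) * t * x ^ (-p) + A (x * t) * (-p * x ^ (-p - 1))
    with hg'
  have key : ∀ ⦃x⦄, x ∈ Set.Icc σ 1 → -G x ≤ -G σ := by
    apply image_le_of_deriv_right_le_deriv_boundary (f' := fun x => -(g' x))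
      (B := fun _ => -G σ) (B' := fun _ => (0:ℝ))
    · exact (G_cont h t p σ hσ).neg
    · intro x hx
      exact (G_rderiv h ht p (lt_of_lt_of_le hσ hx.1)).neg
    · exact le_rfl
    · exact continuousOn_const
    · intro x hx; exact hasDerivWithinAt_const x _ _
    · intro x hx
      have hx0 : (0:ℝ) < x := lt_of_lt_of_le hσ hx.1
      have hxt : (0:ℝ) < x * t := mul_pos hx0 ht
      have hkey := hp (x * t) hxt
      have hpow : x ^ (-p) = x ^ (-p - 1) * x := by
        rw [← Real.rpow_add_one hx0.ne' (-p - 1)]; ring_nf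
      have hpos : (0:ℝ) ≤ x ^ (-p - 1) := Real.rpow_nonneg hx0.le _
      have hstep : p * A (x * t) * x ^ (-p - 1) ≤ a (x * t) * t * x ^ (-p) := by
        rw [hpow]
        calc p * A (x * t) * x ^ (-p - 1) ≤ x * t * a (x * t) * x ^ (-p - 1) :=
              mul_le_mul_of_nonneg_right hkey hpos
          _ = a (x * t) * t * (x ^ (-p - 1) * x) := by ring
      simp only [neg_le, neg_zero, hg', neg_neg]
      nlinarith [hstep]
  have h1m : (1:ℝ) ∈ Set.Icc σ 1 := ⟨hσ1, le_rfl⟩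
  have hk := key h1m
  have hG1 : G σ ≤ G 1 := by linarith
  have hG1' : A (σ * t) * σ ^ (-p) ≤ A t := by
    simpa [hG, Real.one_rpow] using hG1
  have hσp : (0:ℝ) < σ ^ p := Real.rpow_pos_of_pos hσ p
  rw [Real.rpow_neg hσ.le] at hG1'
  calc A (σ * t) = A (σ * t) * (σ ^ p)⁻¹ * σ ^ p := by field_simp
    _ ≤ A t * σ ^ p := mul_le_mul_of_nonneg_right hG1' hσp.le
    _ = σ ^ p * A t := mul_comm _ _

/-- σ^q A(t) ≤ A(σt) for 0 < σ ≤ 1, given y a(y) ≤ q A(y) on (0,∞). -/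
lemma scale_lower (h : IsNFunctionDeriv A a) {q : ℝ}
    (hq : ∀ y > (0:ℝ), y * a y ≤ q * A y)
    {t σ : ℝ} (ht : 0 < t) (hσ : 0 < σ) (hσ1 : σ ≤ 1) :
    σ ^ q * A t ≤ A (σ * t) := by
  set G : ℝ → ℝ := fun w => A (w * t) * w ^ (-q) with hG
  set g' : ℝ → ℝ := fun x => a (x * t) * t * x ^ (-q) + A (x * t) * (-q * x ^ (-q - 1))
    with hg'
  have key : ∀ ⦃x⦄, x ∈ Set.Icc σ 1 → G x ≤ G σ := by
    apply image_le_of_deriv_right_le_deriv_boundary (f' := g')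
      (B := fun _ => G σ) (B' := fun _ => (0:ℝ))
    · exact G_cont h t q σ hσ
    · intro x hx
      exact G_rderiv h ht q (lt_of_lt_of_le hσ hx.1)
    · exact le_rfl
    · exact continuousOn_const
    · intro x hx; exact hasDerivWithinAt_const x _ _
    · intro x hx
      have hx0 : (0:ℝ) < x := lt_of_lt_of_le hσ hx.1
      have hxt : (0:ℝ) < x * t := mul_pos hx0 ht
      have hkey := hq (x * t) hxt
      have hpow : x ^ (-q) = x ^ (-q - 1) * x := by
        rw [← Real.rpow_add_one hx0.ne' (-q - 1)]; ring_nf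
      have hpos : (0:ℝ) ≤ x ^ (-q - 1) := Real.rpow_nonneg hx0.le _
      have hstep : a (x * t) * t * x ^ (-q) ≤ q * A (x * t) * x ^ (-q - 1) := by
        rw [hpow]
        calc a (x * t) * t * (x ^ (-q - 1) * x) = x * t * a (x * t) * x ^ (-q - 1) := by
              ring
          _ ≤ q * A (x * t) * x ^ (-q - 1) := mul_le_mul_of_nonneg_right hkey hpos
      simp only [hg']
      nlinarith [hstep]
  have h1m : (1:ℝ) ∈ Set.Icc σ 1 := ⟨hσ1, le_rfl⟩
  have hG1 : G 1 ≤ G σ := key h1m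
  have hG1' : A t ≤ A (σ * t) * σ ^ (-q) := by
    simpa [hG, Real.one_rpow] using hG1
  have hσq : (0:ℝ) < σ ^ q := Real.rpow_pos_of_pos hσ q
  rw [Real.rpow_neg hσ.le] at hG1'
  calc σ ^ q * A t ≤ σ ^ q * (A (σ * t) * (σ ^ q)⁻¹) :=
        mul_le_mul_of_nonneg_left hG1' hσq.le
    _ = A (σ * t) := by field_simp

end NFunAux

/-- if `[u]_{s,A} < 1` then `[u]^{p⁰} ≤ φ(u) ≤ [u]^{p₀}`. -/
theorem modular_bounds_of_seminorm_lt_one {N : ℕ} (hN : 0 < N)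
    (Ω : Set (EuclideanSpace ℝ (Fin N))) (hΩ : IsOpen Ω)
    (s : ℝ) (hs : s ∈ Set.Ioo (0:ℝ) 1) (A a : ℝ → ℝ)
    (hAa : IsNFunctionDeriv A a)
    (hp0 : 1 < sInf (ratioSet A a)) (hbdd : BddAbove (ratioSet A a))
    (u : EuclideanSpace ℝ (Fin N) → ℝ) (hu : MemWsLA A s Ω u)
    (hlt : gaglSeminorm A s Ω u < 1) :
    ENNReal.ofReal (gaglSeminorm A s Ω u ^ sSup (ratioSet A a)) ≤ gaglModular A s Ω u ∧
      gaglModular A s Ω u ≤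
        ENNReal.ofReal (gaglSeminorm A s Ω u ^ sInf (ratioSet A a)) := by
  classical
  set P := sInf (ratioSet A a) with hPdef
  set Q := sSup (ratioSet A a) with hQdef
  set L := gaglSeminorm A s Ω u with hLdef
  have hRne : (ratioSet A a).Nonempty := ⟨1 * a 1 / A 1, 1, one_pos, rfl⟩
  have hRbelow : BddBelow (ratioSet A a) := by
    refine ⟨0, ?_⟩
    rintro r ⟨t, ht, rfl⟩
    have h1 : 0 ≤ a t := (hAa.pos t ht).le
    have h2 : 0 < A t := hAa.toIsNFunction.pos t ht
    positivity
  have hP1 : 1 < P := hp0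
  have hPQ : P ≤ Q := csInf_le_csSup hRne hRbelow hbdd
  have hQ0 : 0 < Q := lt_of_lt_of_le (lt_trans one_pos hP1) hPQ
  have hup : ∀ y > (0:ℝ), P * A y ≤ y * a y := by
    intro y hy
    have h1 : P ≤ y * a y / A y := csInf_le hRbelow ⟨y, hy, rfl⟩
    have hA : 0 < A y := hAa.toIsNFunction.pos y hy
    calc P * A y ≤ y * a y / A y * A y := mul_le_mul_of_nonneg_right h1 hA.le
      _ = y * a y := by field_simp
  have hdown : ∀ y > (0:ℝ), y * a y ≤ Q * A y := by
    intro y hy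
    have h1 : y * a y / A y ≤ Q := le_csSup hbdd ⟨y, hy, rfl⟩
    have hA : 0 < A y := hAa.toIsNFunction.pos y hy
    calc y * a y = y * a y / A y * A y := by field_simp
      _ ≤ Q * A y := mul_le_mul_of_nonneg_right h1 hA.le
  set M : ℝ → ℝ≥0∞ := fun lam => ∫⁻ x in Ω, ∫⁻ y in Ω,
    ENNReal.ofReal (A (|u x - u y| / (lam * ‖x - y‖ ^ s)) / ‖x - y‖ ^ N) with hMdef
  have hM1 : gaglModular A s Ω u = M 1 := by
    simp only [hMdef, gaglModular]
    exact lintegral_congr fun x => lintegral_congr fun y => by rw [one_mul]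
  have harg : ∀ (ν σ d rs : ℝ), ν ≠ 0 → σ ≠ 0 →
      d / (ν / σ * rs) = σ * (d / (ν * rs)) := by
    intro ν σ d rs hν hσ
    rcases eq_or_ne rs 0 with h | h
    · simp [h]
    · field_simp
  have hptle : ∀ (ν σ : ℝ), 0 < ν → 0 < σ → σ ≤ 1 →
      ∀ x y : EuclideanSpace ℝ (Fin N),
      ENNReal.ofReal (A (|u x - u y| / (ν / σ * ‖x - y‖ ^ s)) / ‖x - y‖ ^ N) ≤
        ENNReal.ofReal (σ ^ P) *
          ENNReal.ofReal (A (|u x - u y| / (ν * ‖x - y‖ ^ s)) / ‖x - y‖ ^ N) := by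
    intro ν σ hν hσ hσ1 x y
    set T := |u x - u y| / (ν * ‖x - y‖ ^ s) with hT
    have hrs : (0:ℝ) ≤ ‖x - y‖ ^ s := Real.rpow_nonneg (norm_nonneg _) s
    have hT0 : 0 ≤ T := div_nonneg (abs_nonneg _) (by positivity)
    have hscale : A (σ * T) ≤ σ ^ P * A T := by
      rcases hT0.eq_or_lt with h0 | h0
      · simp [← h0, NFunAux.A_zero hAa]
      · exact NFunAux.scale_upper hAa hup h0 hσ hσ1
    rw [harg ν σ _ _ hν.ne' hσ.ne',
      ← ENNReal.ofReal_mul (Real.rpow_nonneg hσ.le _)]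
    apply ENNReal.ofReal_le_ofReal
    have hrN : (0:ℝ) ≤ ‖x - y‖ ^ N := pow_nonneg (norm_nonneg _) N
    calc A (σ * T) / ‖x - y‖ ^ N = A (σ * T) * (‖x - y‖ ^ N)⁻¹ := div_eq_mul_inv _ _
      _ ≤ σ ^ P * A T * (‖x - y‖ ^ N)⁻¹ :=
        mul_le_mul_of_nonneg_right hscale (inv_nonneg.2 hrN)
      _ = σ ^ P * (A T / ‖x - y‖ ^ N) := by rw [div_eq_mul_inv]; ring
  have hptge : ∀ (ν σ : ℝ), 0 < ν → 0 < σ → σ ≤ 1 →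
      ∀ x y : EuclideanSpace ℝ (Fin N),
      ENNReal.ofReal (σ ^ Q) *
          ENNReal.ofReal (A (|u x - u y| / (ν * ‖x - y‖ ^ s)) / ‖x - y‖ ^ N) ≤
        ENNReal.ofReal (A (|u x - u y| / (ν / σ * ‖x - y‖ ^ s)) / ‖x - y‖ ^ N) := by
    intro ν σ hν hσ hσ1 x y
    set T := |u x - u y| / (ν * ‖x - y‖ ^ s) with hT
    have hrs : (0:ℝ) ≤ ‖x - y‖ ^ s := Real.rpow_nonneg (norm_nonneg _) s
    have hT0 : 0 ≤ T := div_nonneg (abs_nonneg _) (by positivity)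
    have hscale : σ ^ Q * A T ≤ A (σ * T) := by
      rcases hT0.eq_or_lt with h0 | h0
      · simp [← h0, NFunAux.A_zero hAa]
      · exact NFunAux.scale_lower hAa hdown h0 hσ hσ1
    rw [harg ν σ _ _ hν.ne' hσ.ne',
      ← ENNReal.ofReal_mul (Real.rpow_nonneg hσ.le _)]
    apply ENNReal.ofReal_le_ofReal
    have hrN : (0:ℝ) ≤ ‖x - y‖ ^ N := pow_nonneg (norm_nonneg _) N
    calc σ ^ Q * (A T / ‖x - y‖ ^ N) = σ ^ Q * A T * (‖x - y‖ ^ N)⁻¹ := by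
          rw [div_eq_mul_inv]; ring
      _ ≤ A (σ * T) * (‖x - y‖ ^ N)⁻¹ :=
        mul_le_mul_of_nonneg_right hscale (inv_nonneg.2 hrN)
      _ = A (σ * T) / ‖x - y‖ ^ N := (div_eq_mul_inv _ _).symm
  have hconst : ∀ (ν : ℝ) (c : ℝ≥0∞), c ≠ ⊤ →
      (∫⁻ x in Ω, ∫⁻ y in Ω, c *
        ENNReal.ofReal (A (|u x - u y| / (ν * ‖x - y‖ ^ s)) / ‖x - y‖ ^ N)) = c * M ν := by
    intro ν c hc
    simp only [hMdef]
    simp_rw [lintegral_const_mul' c _ hc]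
  have hkey_le : ∀ (ν σ : ℝ), 0 < ν → 0 < σ → σ ≤ 1 →
      M (ν / σ) ≤ ENNReal.ofReal (σ ^ P) * M ν := by
    intro ν σ hν hσ hσ1
    rw [← hconst ν _ ENNReal.ofReal_ne_top]
    exact lintegral_mono fun x => lintegral_mono fun y => hptle ν σ hν hσ hσ1 x y
  have hkey_ge : ∀ (ν σ : ℝ), 0 < ν → 0 < σ → σ ≤ 1 →
      ENNReal.ofReal (σ ^ Q) * M ν ≤ M (ν / σ) := by
    intro ν σ hν hσ hσ1
    rw [← hconst ν _ ENNReal.ofReal_ne_top]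
    exact lintegral_mono fun x => lintegral_mono fun y => hptge ν σ hν hσ hσ1 x y
  have hanti : ∀ (l1 l2 : ℝ), 0 < l1 → l1 ≤ l2 → M l2 ≤ M l1 := by
    intro l1 l2 h1 h12
    refine lintegral_mono fun x => lintegral_mono fun y => ?_
    apply ENNReal.ofReal_le_ofReal
    have hrN : (0:ℝ) ≤ ‖x - y‖ ^ N := pow_nonneg (norm_nonneg _) N
    have hrs : (0:ℝ) ≤ ‖x - y‖ ^ s := Real.rpow_nonneg (norm_nonneg _) s
    have harg2 : |u x - u y| / (l2 * ‖x - y‖ ^ s) ≤ |u x - u y| / (l1 * ‖x - y‖ ^ s) := by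
      rcases eq_or_ne (‖x - y‖ ^ s) 0 with h | h
      · simp [h]
      · have hrs' : (0:ℝ) < ‖x - y‖ ^ s := lt_of_le_of_ne hrs (Ne.symm h)
        exact div_le_div_of_nonneg_left (abs_nonneg _) (mul_pos h1 hrs')
          (mul_le_mul_of_nonneg_right h12 hrs)
    have hmem1 : |u x - u y| / (l2 * ‖x - y‖ ^ s) ∈ Set.Ici (0:ℝ) :=
      div_nonneg (abs_nonneg _) (mul_nonneg (h1.trans_le h12).le hrs)
    have hmem2 : |u x - u y| / (l1 * ‖x - y‖ ^ s) ∈ Set.Ici (0:ℝ) :=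
      div_nonneg (abs_nonneg _) (mul_nonneg h1.le hrs)
    have := NFunAux.A_mono hAa hmem1 hmem2 harg2
    calc A (|u x - u y| / (l2 * ‖x - y‖ ^ s)) / ‖x - y‖ ^ N
        = A (|u x - u y| / (l2 * ‖x - y‖ ^ s)) * (‖x - y‖ ^ N)⁻¹ := div_eq_mul_inv _ _
      _ ≤ A (|u x - u y| / (l1 * ‖x - y‖ ^ s)) * (‖x - y‖ ^ N)⁻¹ :=
        mul_le_mul_of_nonneg_right this (inv_nonneg.2 hrN)
      _ = A (|u x - u y| / (l1 * ‖x - y‖ ^ s)) / ‖x - y‖ ^ N := (div_eq_mul_inv _ _).symm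
  set S : Set ℝ := {lam : ℝ | 0 < lam ∧ M lam ≤ 1} with hSdef
  have hLS : L = sInf S := rfl
  have hSbelow : BddBelow S := ⟨0, fun x hx => hx.1.le⟩
  have hSne : S.Nonempty := by
    obtain ⟨lam0, hlam0, hfin⟩ := hu.2
    have hMeq : M lam0⁻¹ = ∫⁻ x in Ω, ∫⁻ y in Ω,
        ENNReal.ofReal (A (lam0 * |u x - u y| / ‖x - y‖ ^ s) / ‖x - y‖ ^ N) := by
      refine lintegral_congr fun x => lintegral_congr fun y => ?_
      congr 2
      rcases eq_or_ne (‖x - y‖ ^ s) 0 with h | h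
      · simp [h]
      · field_simp
    have hC : M lam0⁻¹ < ⊤ := by rw [hMeq]; exact hfin
    set C := M lam0⁻¹ with hCdef
    set σ0 : ℝ := min 1 (C.toReal + 1)⁻¹ with hσ0def
    have hCt0 : 0 ≤ C.toReal := ENNReal.toReal_nonneg
    have hσ0 : 0 < σ0 := lt_min one_pos (by positivity)
    have hσ01 : σ0 ≤ 1 := min_le_left _ _
    have hbound : ENNReal.ofReal (σ0 ^ P) * C ≤ 1 := by
      have hσP : σ0 ^ P ≤ σ0 := by
        calc σ0 ^ P ≤ σ0 ^ (1:ℝ) :=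
            Real.rpow_le_rpow_of_exponent_ge hσ0 hσ01 hP1.le
          _ = σ0 := Real.rpow_one σ0
      have hrw : C = ENNReal.ofReal C.toReal := (ENNReal.ofReal_toReal hC.ne).symm
      rw [hrw, ← ENNReal.ofReal_mul (Real.rpow_nonneg hσ0.le _), ← ENNReal.ofReal_one]
      apply ENNReal.ofReal_le_ofReal
      have hσle : σ0 ≤ (C.toReal + 1)⁻¹ := min_le_right _ _
      have h1 : σ0 ^ P * C.toReal ≤ (C.toReal + 1)⁻¹ * C.toReal :=
        mul_le_mul_of_nonneg_right (le_trans hσP hσle) hCt0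
      have h2 : (C.toReal + 1)⁻¹ * C.toReal ≤ 1 := by
        rw [inv_mul_le_iff₀ (by positivity)]
        linarith
      linarith
    refine ⟨lam0⁻¹ / σ0, ⟨by positivity, ?_⟩⟩
    calc M (lam0⁻¹ / σ0) ≤ ENNReal.ofReal (σ0 ^ P) * C :=
        hkey_le lam0⁻¹ σ0 (inv_pos.2 hlam0) hσ0 hσ01
      _ ≤ 1 := hbound
  have hL0 : 0 ≤ L := by
    rw [hLS]
    exact Real.sInf_nonneg fun x hx => hx.1.le
  have hmemS : ∀ lam, L < lam → lam ∈ S := by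
    intro lam hl
    obtain ⟨m, hmS, hmlt⟩ := exists_lt_of_csInf_lt hSne (by rw [← hLS]; exact hl)
    exact ⟨lt_of_le_of_lt hL0 hl, le_trans (hanti m lam hmS.1 hmlt.le) hmS.2⟩
  have hupper : ∀ lam, L < lam → lam ≤ 1 →
      gaglModular A s Ω u ≤ ENNReal.ofReal (lam ^ P) := by
    intro lam hl hle1
    have hlam0 : 0 < lam := lt_of_le_of_lt hL0 hl
    have h1 : M 1 ≤ ENNReal.ofReal (lam ^ P) * M lam := by
      have := hkey_le lam lam hlam0 hlam0 hle1
      rwa [div_self hlam0.ne'] at this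
    calc gaglModular A s Ω u = M 1 := hM1
      _ ≤ ENNReal.ofReal (lam ^ P) * M lam := h1
      _ ≤ ENNReal.ofReal (lam ^ P) * 1 := mul_le_mul_right (hmemS lam hl).2 _
      _ = ENNReal.ofReal (lam ^ P) := mul_one _
  have hlower : ∀ lam, 0 < lam → lam < L →
      ENNReal.ofReal (lam ^ Q) ≤ gaglModular A s Ω u := by
    intro lam hlam0 hlamL
    have hlam1 : lam ≤ 1 := le_of_lt (lt_trans hlamL hlt)
    have hnotS : lam ∉ S := by
      intro hmem
      have hcontra : L ≤ lam := by rw [hLS]; exact csInf_le hSbelow hmem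
      exact absurd hcontra (not_le.2 hlamL)
    have hMlam : 1 < M lam := by
      by_contra hle
      exact hnotS ⟨hlam0, le_of_not_gt hle⟩
    have h2 : ENNReal.ofReal (lam ^ Q) * M lam ≤ M 1 := by
      have := hkey_ge lam lam hlam0 hlam0 hlam1
      rwa [div_self hlam0.ne'] at this
    calc ENNReal.ofReal (lam ^ Q) = ENNReal.ofReal (lam ^ Q) * 1 := (mul_one _).symm
      _ ≤ ENNReal.ofReal (lam ^ Q) * M lam := mul_le_mul_right hMlam.le _
      _ ≤ M 1 := h2
      _ = gaglModular A s Ω u := hM1.symm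
  constructor
  · rcases hL0.eq_or_lt with h0 | h0
    · rw [← h0, Real.zero_rpow hQ0.ne']
      simp
    · set gn : ℕ → ℝ := fun n => L - L / (n + 2) with hgndef
      have hgn_mem : ∀ n : ℕ, 0 < gn n ∧ gn n < L := by
        intro n
        have hn2 : (1:ℝ) < (n:ℝ) + 2 := by
          have : (0:ℝ) ≤ (n:ℝ) := Nat.cast_nonneg n
          linarith
        have hdiv : L / ((n:ℝ) + 2) < L := div_lt_self h0 hn2
        have hdivpos : 0 < L / ((n:ℝ) + 2) := by positivity
        constructor
        · simp only [hgndef]; linarith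
        · simp only [hgndef]; linarith
      have htend : Tendsto gn atTop (nhds L) := by
        have h2 : Tendsto (fun n : ℕ => ((n:ℝ) + 2)) atTop atTop :=
          Filter.tendsto_atTop_add_const_right _ _ tendsto_natCast_atTop_atTop
        have h1 : Tendsto (fun n : ℕ => L / ((n:ℝ) + 2)) atTop (nhds 0) :=
          h2.const_div_atTop L
        have h3 := Filter.Tendsto.sub
          (tendsto_const_nhds : Tendsto (fun _ : ℕ => L) atTop (nhds L)) h1
        simpa using h3
      have hcontQ : ContinuousAt (fun x : ℝ => ENNReal.ofReal (x ^ Q)) L :=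
        (ENNReal.continuous_ofReal.continuousAt).comp
          (Real.continuousAt_rpow_const L Q (Or.inr hQ0.le))
      refine le_of_tendsto (hcontQ.tendsto.comp htend) ?_
      filter_upwards with n
      exact hlower (gn n) (hgn_mem n).1 (hgn_mem n).2
  · set fn : ℕ → ℝ := fun n => L + (1 - L) / (n + 1) with hfndef
    have h1L : 0 < 1 - L := by linarith
    have hfn_mem : ∀ n : ℕ, L < fn n ∧ fn n ≤ 1 := by
      intro n
      have hn1 : (1:ℝ) ≤ (n:ℝ) + 1 := by
        have : (0:ℝ) ≤ (n:ℝ) := Nat.cast_nonneg n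
        linarith
      have hdivpos : 0 < (1 - L) / ((n:ℝ) + 1) := by positivity
      have hdivle : (1 - L) / ((n:ℝ) + 1) ≤ 1 - L := div_le_self h1L.le hn1
      constructor
      · simp only [hfndef]; linarith
      · simp only [hfndef]; linarith
    have htend : Tendsto fn atTop (nhds L) := by
      have h2 : Tendsto (fun n : ℕ => ((n:ℝ) + 1)) atTop atTop :=
        Filter.tendsto_atTop_add_const_right _ _ tendsto_natCast_atTop_atTop
      have h1 : Tendsto (fun n : ℕ => (1 - L) / ((n:ℝ) + 1)) atTop (nhds 0) :=
        h2.const_div_atTop (1 - L)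
      have h3 := Filter.Tendsto.add
        (tendsto_const_nhds : Tendsto (fun _ : ℕ => L) atTop (nhds L)) h1
      simpa using h3
    have hcontP : ContinuousAt (fun x : ℝ => ENNReal.ofReal (x ^ P)) L :=
      (ENNReal.continuous_ofReal.continuousAt).comp
        (Real.continuousAt_rpow_const L P (Or.inr (by linarith)))
    refine ge_of_tendsto (hcontP.tendsto.comp htend) ?_
    filter_upwards with n
    exact hupper (fn n) (hfn_mem n).1 (hfn_mem n).2


end
end
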